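/- Transport equation for the inverse foliation density μ. In the eikonal setup, define F_{αβ}=∂_φ g_{αβ}(φ,∂φ) and G^γ_{αβ}=∂_{(∂_γφ)} g_{αβ}(φ,∂φ) (partial derivatives of the inverse-matrix entries g_{αβ}, viewed as smooth functions of (φ,∂φ), evaluated along (φ,∂φ)); for vector fields V,W,Z set F_{VW}=Σ F_{αβ}V^αW^β, G^γ_{VW}=Σ G^γ_{αβ}V^αW^β, and (FG)_{VW}(Z)=F_{VW}·Zφ+Σ_γ G^γ_{VW}·Z(∂_γφ). Then on U one has L̊μ = −(1/2)μ[(FG)_{L̊L̊}(L̊)+2(FG)_{T̃L̊}(L̊)] + (1/2)F_{L̊L̊}·Tφ + (1/2)Σ_γ G^γ_{L̊L̊}·T(∂_γφ). -/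

import Mathlib

noncomputable section

open Real MeasureTheory

namespace PaperSP4D

/-- A spacetime point in `ℝ^{1+4}`; coordinate `0` is the time `t`. -/
abbrev Pt : Type := Fin 5 → ℝ

/-- The Euclidean norm on `ℝ⁴`. -/
def nrm (x : Fin 4 → ℝ) : ℝ := Real.sqrt (∑ i, (x i) ^ 2)

/-- The spatial radius `r = |x|` of a spacetime point. -/
def rad (p : Pt) : ℝ := nrm fun i => p i.succ

/-- Derivative of `f` along the vector field `V`. -/
def vfD (V : Pt → Pt) (f : Pt → ℝ) : Pt → ℝ := fun p => fderiv ℝ f p (V p)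

/-- The partial derivative `∂_α`. -/
def pd (α : Fin 5) : (Pt → ℝ) → Pt → ℝ := vfD fun _ => Pi.single α 1

/-- Apply a word (list) of vector fields, leftmost applied last. -/
def wordD (w : List (Pt → Pt)) (f : Pt → ℝ) : Pt → ℝ := w.foldr vfD f

/-- `L = ∂_t + ∂_r`. -/
def Lvf : Pt → Pt := fun p => Fin.cons 1 fun i => p i.succ / rad p

/-- `L̲ = ∂_t − ∂_r`. -/
def Lbvf : Pt → Pt := fun p => Fin.cons 1 fun i => -(p i.succ / rad p)

/-- The scaling field `S = t∂_t + Σ x^k ∂_k`. -/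
def Svf : Pt → Pt := fun p => p

/-- The Lorentz boost `H_i = t∂_i + x^i∂_t`. -/
def Hvf (i : Fin 4) : Pt → Pt :=
  fun p => Fin.cons (p i.succ) fun j => if j = i then p 0 else 0

/-- The rotation `Ω_{ij} = x^i∂_j − x^j∂_i`. -/
def Ovf (i j : Fin 4) : Pt → Pt :=
  fun p => Fin.cons 0 fun k =>
    (if k = j then p i.succ else 0) - (if k = i then p j.succ else 0)

/-- Index set for the rotations `Ω_{ij}`, `1 ≤ i < j ≤ 4`. -/
abbrev OmIdx : Type := {ij : Fin 4 × Fin 4 // ij.1 < ij.2}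

/-- A word `Ω^κ` of rotation fields, given by a list of indices. -/
def oword (κ : List OmIdx) (f : Pt → ℝ) : Pt → ℝ :=
  wordD (κ.map fun ij => Ovf ij.1.1 ij.1.2) f

/-- A word `∂^q` of partial derivatives, given by a list of indices. -/
def pword (q : List (Fin 5)) (f : Pt → ℝ) : Pt → ℝ :=
  wordD (q.map fun α => fun _ => Pi.single α 1) f

/-- A word of rotation fields, given by a tuple of indices. -/
def owordF {k : ℕ} (w : Fin k → OmIdx) (f : Pt → ℝ) : Pt → ℝ :=
  wordD (List.ofFn fun i => Ovf ((w i).1.1) ((w i).1.2)) f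

/-- A word of partial derivatives, given by a tuple of indices. -/
def pwordF {k : ℕ} (w : Fin k → Fin 5) (f : Pt → ℝ) : Pt → ℝ :=
  wordD (List.ofFn fun i => fun _ => Pi.single (w i) 1) f

/-- The Minkowski metric `diag(−1,1,1,1,1)`. -/
def mink (α β : Fin 5) : ℝ :=
  if α = 0 then (if β = 0 then -1 else 0) else (if α = β then 1 else 0)

/-- The matrix `(g^{αβ}(φ,∂φ))(p)`. -/
def Gmat (g : Fin 5 → Fin 5 → ℝ → Pt → ℝ) (φ : Pt → ℝ) (p : Pt) :
    Matrix (Fin 5) (Fin 5) ℝ :=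
  Matrix.of fun α β => g α β (φ p) fun γ => pd γ φ p

/-- The bilinear form `g(V,W) = Σ g_{αβ}V^αW^β` built from the inverse matrix `(g_{αβ})`. -/
def gLow (g : Fin 5 → Fin 5 → ℝ → Pt → ℝ) (φ : Pt → ℝ) (p : Pt) (V W : Pt) : ℝ :=
  ∑ α, ∑ β, (Gmat g φ p)⁻¹ α β * V α * W β

/-- The inverse foliation density `μ = −(Σ_α g^{α0}∂_αu)^{−1}`. -/
def muF (g : Fin 5 → Fin 5 → ℝ → Pt → ℝ) (φ u : Pt → ℝ) (p : Pt) : ℝ :=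
  -(∑ α, g α 0 (φ p) (fun γ => pd γ φ p) * pd α u p)⁻¹

/-- The rescaled null field `L̊ = −μ Σ g^{αβ}(∂_αu)∂_β`. -/
def Lr (g : Fin 5 → Fin 5 → ℝ → Pt → ℝ) (φ u : Pt → ℝ) (p : Pt) : Pt :=
  fun β => -(muF g φ u p) * ∑ α, g α β (φ p) (fun γ => pd γ φ p) * pd α u p

/-- `T̃ = −g^{ν0}∂_ν − L̊`. -/
def Ttil (g : Fin 5 → Fin 5 → ℝ → Pt → ℝ) (φ u : Pt → ℝ) (p : Pt) : Pt :=
  fun ν => -g ν 0 (φ p) (fun γ => pd γ φ p) - Lr g φ u p ν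

/-- `T = μT̃`. -/
def Tvf (g : Fin 5 → Fin 5 → ℝ → Pt → ℝ) (φ u : Pt → ℝ) (p : Pt) : Pt :=
  fun ν => muF g φ u p * Ttil g φ u p ν

/-- `∂̲L̊ = μL̊ + 2T`. -/
def uLr (g : Fin 5 → Fin 5 → ℝ → Pt → ℝ) (φ u : Pt → ℝ) (p : Pt) : Pt :=
  fun ν => muF g φ u p * Lr g φ u p ν + 2 * Tvf g φ u p ν

/-- The eikonal setup: `U` open, smooth symmetric coefficients with `g^{00} ≡ −1`,
`φ, u` smooth on `U`, `(g^{αβ}(φ,∂φ))` invertible, `u` solving the eikonal equation with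
`−Σ g^{α0}∂_αu > 0` on `U`. -/
structure EikonalSetup (U : Set Pt) (g : Fin 5 → Fin 5 → ℝ → Pt → ℝ)
    (φ u : Pt → ℝ) : Prop where
  openU : IsOpen U
  smooth_g : ∀ α β, ContDiff ℝ (⊤ : ℕ∞) fun q : ℝ × Pt => g α β q.1 q.2
  symm_g : ∀ α β a v, g α β a v = g β α a v
  g00 : ∀ a v, g 0 0 a v = -1
  smooth_φ : ContDiffOn ℝ (⊤ : ℕ∞) φ U
  smooth_u : ContDiffOn ℝ (⊤ : ℕ∞) u U
  inv_g : ∀ p ∈ U, IsUnit (Gmat g φ p)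
  eikonal : ∀ p ∈ U,
    (∑ α, ∑ β, g α β (φ p) (fun γ => pd γ φ p) * pd α u p * pd β u p) = 0
  pos : ∀ p ∈ U, 0 < -(∑ α, g α 0 (φ p) (fun γ => pd γ φ p) * pd α u p)

/-- The entries `g_{αβ}` of the inverse matrix, as smooth functions of `(φ, ∂φ)`. -/
def lowInv (g : Fin 5 → Fin 5 → ℝ → Pt → ℝ) (α β : Fin 5) (q : ℝ × Pt) : ℝ :=
  ((Matrix.of fun α' β' => g α' β' q.1 q.2 : Matrix (Fin 5) (Fin 5) ℝ))⁻¹ α β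

/-- `F_{αβ} = ∂_φ g_{αβ}`, evaluated along `(φ, ∂φ)`. -/
def lowF (g : Fin 5 → Fin 5 → ℝ → Pt → ℝ) (φ : Pt → ℝ) (α β : Fin 5) (p : Pt) : ℝ :=
  fderiv ℝ (lowInv g α β) (φ p, fun γ => pd γ φ p) ((1 : ℝ), (0 : Pt))

/-- `G^γ_{αβ} = ∂_{(∂_γφ)} g_{αβ}`, evaluated along `(φ, ∂φ)`. -/
def lowG (g : Fin 5 → Fin 5 → ℝ → Pt → ℝ) (φ : Pt → ℝ) (γ0 α β : Fin 5) (p : Pt) : ℝ :=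
  fderiv ℝ (lowInv g α β) (φ p, fun γ => pd γ φ p) ((0 : ℝ), Pi.single γ0 1)

/-- The contraction `F_{VW}`. -/
def Fc (g : Fin 5 → Fin 5 → ℝ → Pt → ℝ) (φ : Pt → ℝ) (p : Pt) (V W : Pt) : ℝ :=
  ∑ α, ∑ β, lowF g φ α β p * V α * W β

/-- The contraction `G^γ_{VW}`. -/
def Gc (g : Fin 5 → Fin 5 → ℝ → Pt → ℝ) (φ : Pt → ℝ) (γ0 : Fin 5) (p : Pt) (V W : Pt) : ℝ :=
  ∑ α, ∑ β, lowG g φ γ0 α β p * V α * W β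

/-- `(FG)_{VW}(Z) = F_{VW}·Zφ + Σ_γ G^γ_{VW}·Z(∂_γφ)`. -/
def FGc (g : Fin 5 → Fin 5 → ℝ → Pt → ℝ) (φ : Pt → ℝ) (p : Pt) (V W : Pt)
    (Z : Pt → Pt) : ℝ :=
  Fc g φ p V W * vfD Z φ p + ∑ γ, Gc g φ γ p V W * vfD Z (pd γ φ) p

/-! ### Auxiliary material for Statement 10 -/

section Aux10

set_option maxRecDepth 40000
set_option maxHeartbeats 1000000

variable {E : Type*} [NormedAddCommGroup E] [NormedSpace ℝ E]

lemma aux_diff_det {n : ℕ} {B : E → Matrix (Fin n) (Fin n) ℝ} {x : E}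
    (hB : ∀ i j, DifferentiableAt ℝ (fun e => B e i j) x) :
    DifferentiableAt ℝ (fun e => (B e).det) x := by
  simp only [Matrix.det_apply']
  refine DifferentiableAt.fun_sum fun σ _ => DifferentiableAt.const_mul ?_ _
  exact (HasFDerivAt.finset_prod (fun i _ => (hB (σ i) i).hasFDerivAt)).differentiableAt

lemma aux_diff_inv_entry {n : ℕ} {B : E → Matrix (Fin n) (Fin n) ℝ} {x : E}
    (hB : ∀ i j, DifferentiableAt ℝ (fun e => B e i j) x)
    (hdet : (B x).det ≠ 0) (i j : Fin n) :
    DifferentiableAt ℝ (fun e => (B e)⁻¹ i j) x := by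
  have hadj : DifferentiableAt ℝ (fun e => (B e).adjugate i j) x := by
    simp only [Matrix.adjugate_apply]
    refine aux_diff_det fun k l => ?_
    simp only [Matrix.updateRow_apply]
    by_cases hk : k = j <;> simp [hk, hB]
  have heq : (fun e => (B e)⁻¹ i j) = fun e => ((B e).det)⁻¹ * (B e).adjugate i j := by
    funext e
    rw [Matrix.inv_def, Matrix.smul_apply, Ring.inverse_eq_inv', smul_eq_mul]
  rw [heq]
  exact ((aux_diff_det hB).inv hdet).mul hadj

lemma aux_pd_contDiffAt {f : Pt → ℝ} {U : Set Pt} (hU : IsOpen U)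
    (hf : ContDiffOn ℝ (⊤ : ℕ∞) f U) {q : Pt} (hq : q ∈ U) (γ : Fin 5) :
    ContDiffAt ℝ (⊤ : ℕ∞) (pd γ f) q := by
  have h1 : ContDiffAt ℝ (⊤ : ℕ∞) f q := hf.contDiffAt (hU.mem_nhds hq)
  have h2 : ContDiffAt ℝ (⊤ : ℕ∞) (fderiv ℝ f) q := h1.fderiv_right (by simp)
  exact h2.clm_apply contDiffAt_const

/-- The raised metric coefficients along the solution. -/
def upc (g : Fin 5 → Fin 5 → ℝ → Pt → ℝ) (φ : Pt → ℝ) (α β : Fin 5) : Pt → ℝ :=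
  fun q => g α β (φ q) (fun γ => pd γ φ q)

/-- The lowered metric coefficients along the solution. -/
def lowc (g : Fin 5 → Fin 5 → ℝ → Pt → ℝ) (φ : Pt → ℝ) (α β : Fin 5) : Pt → ℝ :=
  fun q => lowInv g α β (φ q, fun γ => pd γ φ q)

variable {U : Set Pt} {g : Fin 5 → Fin 5 → ℝ → Pt → ℝ} {φ u : Pt → ℝ} {q : Pt}

lemma aux_lowc_eq (α β : Fin 5) (q : Pt) : lowc g φ α β q = (Gmat g φ q)⁻¹ α β := by
  show (Matrix.of fun α' β' => g α' β' (φ q) (fun γ => pd γ φ q))⁻¹ α β = (Gmat g φ q)⁻¹ α β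
  rfl

lemma aux_inner_contDiffAt (h : EikonalSetup U g φ u) (hq : q ∈ U) :
    ContDiffAt ℝ (⊤ : ℕ∞) (fun q' => ((φ q', fun γ => pd γ φ q') : ℝ × Pt)) q :=
  (h.smooth_φ.contDiffAt (h.openU.mem_nhds hq)).prodMk
    (contDiffAt_pi.2 fun γ => aux_pd_contDiffAt h.openU h.smooth_φ hq γ)

lemma aux_upc_diff (h : EikonalSetup U g φ u) (hq : q ∈ U) (α β : Fin 5) :
    DifferentiableAt ℝ (upc g φ α β) q :=
  (((h.smooth_g α β).contDiffAt.comp q (aux_inner_contDiffAt h hq)).differentiableAt (by simp))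

lemma aux_det_ne (h : EikonalSetup U g φ u) (hq : q ∈ U) : (Gmat g φ q).det ≠ 0 := by
  have := (Matrix.isUnit_iff_isUnit_det _).mp (h.inv_g q hq)
  exact this.ne_zero

lemma aux_lowInv_diff (h : EikonalSetup U g φ u) (hq : q ∈ U) (α β : Fin 5) :
    DifferentiableAt ℝ (lowInv g α β) ((φ q, fun γ => pd γ φ q) : ℝ × Pt) := by
  show DifferentiableAt ℝ
    (fun e : ℝ × Pt => (Matrix.of fun α' β' => g α' β' e.1 e.2 : Matrix (Fin 5) (Fin 5) ℝ)⁻¹ α β)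
    ((φ q, fun γ => pd γ φ q) : ℝ × Pt)
  refine aux_diff_inv_entry (fun i j => ?_) ?_ α β
  · exact ((h.smooth_g i j).differentiable (by simp)).differentiableAt
  · have hM : (Matrix.of fun α' β' =>
        g α' β' ((φ q, fun γ => pd γ φ q) : ℝ × Pt).1 ((φ q, fun γ => pd γ φ q) : ℝ × Pt).2 :
        Matrix (Fin 5) (Fin 5) ℝ) = Gmat g φ q := rfl
    rw [hM]
    exact aux_det_ne h hq

lemma aux_lowc_diff (h : EikonalSetup U g φ u) (hq : q ∈ U) (α β : Fin 5) :
    DifferentiableAt ℝ (lowc g φ α β) q :=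
  (aux_lowInv_diff h hq α β).comp q ((aux_inner_contDiffAt h hq).differentiableAt (by simp))

lemma aux_pdu_diff (h : EikonalSetup U g φ u) (hq : q ∈ U) (α : Fin 5) :
    DifferentiableAt ℝ (pd α u) q :=
  (aux_pd_contDiffAt h.openU h.smooth_u hq α).differentiableAt (by simp)

lemma aux_pdφ_diff (h : EikonalSetup U g φ u) (hq : q ∈ U) (α : Fin 5) :
    DifferentiableAt ℝ (pd α φ) q :=
  (aux_pd_contDiffAt h.openU h.smooth_φ hq α).differentiableAt (by simp)

lemma aux_φ_diff (h : EikonalSetup U g φ u) (hq : q ∈ U) :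
    DifferentiableAt ℝ φ q :=
  (h.smooth_φ.contDiffAt (h.openU.mem_nhds hq)).differentiableAt (by simp)

end Aux10


section Aux10b

set_option maxRecDepth 40000
set_option maxHeartbeats 1000000

variable {U : Set Pt} {g : Fin 5 → Fin 5 → ℝ → Pt → ℝ} {φ u : Pt → ℝ} {q : Pt}

lemma aux_upc_symm (h : EikonalSetup U g φ u) (α β : Fin 5) (q : Pt) :
    upc g φ α β q = upc g φ β α q := h.symm_g α β _ _

lemma aux_upc_Gmat (α β : Fin 5) (q : Pt) : upc g φ α β q = Gmat g φ q α β := rfl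

lemma aux_mul_inv (h : EikonalSetup U g φ u) (hq : q ∈ U) (α γ : Fin 5) :
    ∑ β, upc g φ α β q * lowc g φ β γ q = if α = γ then 1 else 0 := by
  have h1 : Gmat g φ q * (Gmat g φ q)⁻¹ = 1 :=
    Matrix.mul_nonsing_inv _ ((Matrix.isUnit_iff_isUnit_det _).mp (h.inv_g q hq))
  calc ∑ β, upc g φ α β q * lowc g φ β γ q
      = ∑ β, Gmat g φ q α β * (Gmat g φ q)⁻¹ β γ := by
        refine Finset.sum_congr rfl fun β _ => ?_
        rw [aux_lowc_eq, aux_upc_Gmat]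
    _ = (Gmat g φ q * (Gmat g φ q)⁻¹) α γ := (Matrix.mul_apply).symm
    _ = (1 : Matrix (Fin 5) (Fin 5) ℝ) α γ := by rw [h1]
    _ = if α = γ then 1 else 0 := Matrix.one_apply

lemma aux_inv_mul (h : EikonalSetup U g φ u) (hq : q ∈ U) (α γ : Fin 5) :
    ∑ β, lowc g φ α β q * upc g φ β γ q = if α = γ then 1 else 0 := by
  have h1 : (Gmat g φ q)⁻¹ * Gmat g φ q = 1 :=
    Matrix.nonsing_inv_mul _ ((Matrix.isUnit_iff_isUnit_det _).mp (h.inv_g q hq))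
  calc ∑ β, lowc g φ α β q * upc g φ β γ q
      = ∑ β, (Gmat g φ q)⁻¹ α β * Gmat g φ q β γ := by
        refine Finset.sum_congr rfl fun β _ => ?_
        rw [aux_lowc_eq, aux_upc_Gmat]
    _ = ((Gmat g φ q)⁻¹ * Gmat g φ q) α γ := (Matrix.mul_apply).symm
    _ = (1 : Matrix (Fin 5) (Fin 5) ℝ) α γ := by rw [h1]
    _ = if α = γ then 1 else 0 := Matrix.one_apply

lemma aux_lowc_symm (h : EikonalSetup U g φ u) (α β : Fin 5) (q : Pt) :
    lowc g φ α β q = lowc g φ β α q := by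
  have hsym : (Gmat g φ q).transpose = Gmat g φ q := by
    ext a b
    exact h.symm_g b a _ _
  calc lowc g φ α β q = (Gmat g φ q)⁻¹ α β := aux_lowc_eq α β q
    _ = ((Gmat g φ q).transpose)⁻¹ α β := by rw [hsym]
    _ = ((Gmat g φ q)⁻¹).transpose α β := by rw [Matrix.transpose_nonsing_inv]
    _ = (Gmat g φ q)⁻¹ β α := rfl
    _ = lowc g φ β α q := (aux_lowc_eq β α q).symm

lemma aux_mu_eq (q : Pt) : muF g φ u q = -(∑ α, upc g φ α 0 q * pd α u q)⁻¹ := rfl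

lemma aux_s_neg (h : EikonalSetup U g φ u) (hq : q ∈ U) :
    (∑ α, upc g φ α 0 q * pd α u q) < 0 := by
  have h1 := h.pos q hq
  have h2 : (0:ℝ) < -(∑ α, upc g φ α 0 q * pd α u q) := h1
  linarith

lemma aux_s_ne (h : EikonalSetup U g φ u) (hq : q ∈ U) :
    (∑ α, upc g φ α 0 q * pd α u q) ≠ 0 := ne_of_lt (aux_s_neg h hq)

lemma aux_mu_ne (h : EikonalSetup U g φ u) (hq : q ∈ U) : muF g φ u q ≠ 0 := by
  rw [aux_mu_eq]
  simpa using inv_ne_zero (aux_s_ne h hq)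

lemma aux_Lr_eq (β : Fin 5) (q : Pt) :
    Lr g φ u q β = -(muF g φ u q) * ∑ α, upc g φ α β q * pd α u q := rfl

lemma aux_up0 (ν : Fin 5) (q : Pt) :
    upc g φ ν 0 q = -(Lr g φ u q ν + Ttil g φ u q ν) := by
  have : Ttil g φ u q ν = -upc g φ ν 0 q - Lr g φ u q ν := rfl
  rw [this]; ring

lemma aux_sum_up_psi (h : EikonalSetup U g φ u) (hq : q ∈ U) (β : Fin 5) :
    ∑ α, upc g φ α β q * pd α u q = -(muF g φ u q)⁻¹ * Lr g φ u q β := by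
  rw [aux_Lr_eq]
  have hμ := aux_mu_ne h hq
  field_simp

lemma aux_E1 (h : EikonalSetup U g φ u) (hq : q ∈ U) (α : Fin 5) :
    ∑ β, lowc g φ α β q * Lr g φ u q β = -(muF g φ u q) * pd α u q := by
  have step1 : ∀ β, lowc g φ α β q * Lr g φ u q β
      = ∑ γ, -(muF g φ u q) * (lowc g φ α β q * (upc g φ β γ q * pd γ u q)) := by
    intro β
    rw [aux_Lr_eq, Finset.mul_sum, Finset.mul_sum]
    refine Finset.sum_congr rfl fun γ _ => ?_
    rw [aux_upc_symm h γ β]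
    ring
  rw [Finset.sum_congr rfl fun β _ => step1 β, Finset.sum_comm]
  have step2 : ∀ γ, ∑ β, -(muF g φ u q) * (lowc g φ α β q * (upc g φ β γ q * pd γ u q))
      = -(muF g φ u q) * pd γ u q * (if α = γ then 1 else 0) := by
    intro γ
    rw [← aux_inv_mul h hq α γ, Finset.mul_sum]
    refine Finset.sum_congr rfl fun β _ => ?_
    ring
  rw [Finset.sum_congr rfl fun γ _ => step2 γ]
  simp

lemma aux_psi_eq (h : EikonalSetup U g φ u) (hq : q ∈ U) (α : Fin 5) :
    pd α u q = -(muF g φ u q)⁻¹ * ∑ β, lowc g φ α β q * Lr g φ u q β := by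
  rw [aux_E1 h hq]
  have hμ := aux_mu_ne h hq
  field_simp

lemma aux_Lu (h : EikonalSetup U g φ u) (hq : q ∈ U) :
    ∑ β, pd β u q * Lr g φ u q β = 0 := by
  have hei : ∑ α, ∑ β, upc g φ α β q * pd α u q * pd β u q = 0 := h.eikonal q hq
  have step1 : ∀ β, pd β u q * Lr g φ u q β
      = ∑ α, -(muF g φ u q) * (upc g φ α β q * pd α u q * pd β u q) := by
    intro β
    rw [aux_Lr_eq, Finset.mul_sum, Finset.mul_sum]
    refine Finset.sum_congr rfl fun α _ => ?_
    ring
  rw [Finset.sum_congr rfl fun β _ => step1 β, Finset.sum_comm]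
  have step2 : ∑ α, ∑ β, -(muF g φ u q) * (upc g φ α β q * pd α u q * pd β u q)
      = -(muF g φ u q) * ∑ α, ∑ β, upc g φ α β q * pd α u q * pd β u q := by
    rw [Finset.mul_sum]
    refine Finset.sum_congr rfl fun α _ => ?_
    rw [Finset.mul_sum]
  rw [step2, hei, mul_zero]

lemma aux_gLL (h : EikonalSetup U g φ u) (hq : q ∈ U) :
    ∑ α, ∑ β, lowc g φ α β q * Lr g φ u q α * Lr g φ u q β = 0 := by
  calc ∑ α, ∑ β, lowc g φ α β q * Lr g φ u q α * Lr g φ u q β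
      = ∑ α, Lr g φ u q α * ∑ β, lowc g φ α β q * Lr g φ u q β := by
        refine Finset.sum_congr rfl fun α _ => ?_
        rw [Finset.mul_sum]
        refine Finset.sum_congr rfl fun β _ => ?_
        ring
    _ = ∑ α, Lr g φ u q α * (-(muF g φ u q) * pd α u q) := by
        refine Finset.sum_congr rfl fun α _ => ?_
        rw [aux_E1 h hq]
    _ = -(muF g φ u q) * ∑ α, pd α u q * Lr g φ u q α := by
        rw [Finset.mul_sum]
        refine Finset.sum_congr rfl fun α _ => ?_
        ring
    _ = 0 := by rw [aux_Lu h hq, mul_zero]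

end Aux10b


section Aux10c

set_option maxRecDepth 40000
set_option maxHeartbeats 1600000

variable {U : Set Pt} {g : Fin 5 → Fin 5 → ℝ → Pt → ℝ} {φ u : Pt → ℝ} {p : Pt}

lemma aux_fderiv_mul_apply {f k : Pt → ℝ} {p : Pt} (hf : DifferentiableAt ℝ f p)
    (hk : DifferentiableAt ℝ k p) (v : Pt) :
    fderiv ℝ (fun x => f x * k x) p v
      = fderiv ℝ f p v * k p + f p * fderiv ℝ k p v := by
  rw [fderiv_fun_mul hf hk]
  simp only [ContinuousLinearMap.add_apply, ContinuousLinearMap.smul_apply, smul_eq_mul]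
  ring

lemma aux_fderiv_sum_mul {f k : Fin 5 → Pt → ℝ} {p : Pt}
    (hf : ∀ i, DifferentiableAt ℝ (f i) p) (hk : ∀ i, DifferentiableAt ℝ (k i) p) (v : Pt) :
    fderiv ℝ (fun x => ∑ i, f i x * k i x) p v
      = ∑ i, (fderiv ℝ (f i) p v * k i p + f i p * fderiv ℝ (k i) p v) := by
  rw [fderiv_fun_sum (A := fun i x => f i x * k i x) (fun i _ => (hf i).mul (hk i)), ContinuousLinearMap.sum_apply]
  exact Finset.sum_congr rfl fun i _ => aux_fderiv_mul_apply (hf i) (hk i) v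

lemma aux_fderiv_const_on {f : Pt → ℝ} {c : ℝ} (hU : IsOpen U) (hp : p ∈ U)
    (hf : ∀ q' ∈ U, f q' = c) : fderiv ℝ f p = 0 := by
  have h1 : f =ᶠ[nhds p] fun _ => c := Filter.eventually_of_mem (hU.mem_nhds hp) hf
  rw [h1.fderiv_eq]
  exact fderiv_const_apply c

lemma aux_vec_expand (w : Pt) : w = ∑ β, w β • (Pi.single β 1 : Pt) := by
  funext ν
  rw [Finset.sum_apply]
  simp [Pi.single_apply]

lemma aux_clm_expand (T : Pt →L[ℝ] ℝ) (w : Pt) :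
    T w = ∑ β, w β * T (Pi.single β 1) := by
  conv_lhs => rw [aux_vec_expand w]
  rw [map_sum]
  exact Finset.sum_congr rfl fun β _ => by rw [T.map_smul, smul_eq_mul]

lemma aux_lowc_fderiv (h : EikonalSetup U g φ u) (hp : p ∈ U) (α β : Fin 5) (v : Pt) :
    fderiv ℝ (lowc g φ α β) p v
      = lowF g φ α β p * fderiv ℝ φ p v
        + ∑ γ, lowG g φ γ α β p * fderiv ℝ (pd γ φ) p v := by
  have hin : HasFDerivAt (fun q' => ((φ q', fun γ => pd γ φ q') : ℝ × Pt))
      ((fderiv ℝ φ p).prod (ContinuousLinearMap.pi fun γ => fderiv ℝ (pd γ φ) p)) p :=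
    HasFDerivAt.prodMk (aux_φ_diff h hp).hasFDerivAt
      (hasFDerivAt_pi.2 fun γ => (aux_pdφ_diff h hp γ).hasFDerivAt)
  have hout : DifferentiableAt ℝ (lowInv g α β) ((φ p, fun γ => pd γ φ p) : ℝ × Pt) :=
    aux_lowInv_diff h hp α β
  have hcomp : fderiv ℝ (lowc g φ α β) p
      = (fderiv ℝ (lowInv g α β) ((φ p, fun γ => pd γ φ p) : ℝ × Pt)).comp
          ((fderiv ℝ φ p).prod (ContinuousLinearMap.pi fun γ => fderiv ℝ (pd γ φ) p)) :=
    (hout.hasFDerivAt.comp p hin).fderiv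
  rw [hcomp]
  set T := fderiv ℝ (lowInv g α β) ((φ p, fun γ => pd γ φ p) : ℝ × Pt) with hT
  have hdec : ∀ (a : ℝ) (w : Pt), T (a, w)
      = a * T ((1 : ℝ), (0 : Pt)) + ∑ γ, w γ * T ((0 : ℝ), Pi.single γ 1) := by
    intro a w
    have hsplit : ((a, w) : ℝ × Pt)
        = a • (((1 : ℝ), (0 : Pt)) : ℝ × Pt)
          + ∑ γ, w γ • ((((0 : ℝ), Pi.single γ 1)) : ℝ × Pt) := by
      refine Prod.ext ?_ ?_
      · simp [Prod.fst_sum]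
      · simp [Prod.snd_sum]
        exact aux_vec_expand w
    rw [hsplit, map_add, T.map_smul, _root_.map_sum, smul_eq_mul]
    congr 1
    exact Finset.sum_congr rfl fun γ _ => by rw [T.map_smul, smul_eq_mul]
  have happ : ((fderiv ℝ φ p).prod (ContinuousLinearMap.pi fun γ => fderiv ℝ (pd γ φ) p)) v
      = ((fderiv ℝ φ p v, fun γ => fderiv ℝ (pd γ φ) p v) : ℝ × Pt) := rfl
  rw [ContinuousLinearMap.comp_apply, happ, hdec]
  have h1 : lowF g φ α β p = T ((1 : ℝ), (0 : Pt)) := rfl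
  have h2 : ∀ γ, lowG g φ γ α β p = T ((0 : ℝ), Pi.single γ 1) := fun γ => rfl
  rw [h1, mul_comm]
  congr 1
  exact Finset.sum_congr rfl fun γ _ => by rw [h2 γ, mul_comm]

end Aux10c


section Aux10d

set_option maxRecDepth 40000
set_option maxHeartbeats 1600000

variable {U : Set Pt} {g : Fin 5 → Fin 5 → ℝ → Pt → ℝ} {φ u : Pt → ℝ} {p : Pt}

lemma aux_snd_symm (h : EikonalSetup U g φ u) (hp : p ∈ U) (v w : Pt) :
    fderiv ℝ (fderiv ℝ u) p v w = fderiv ℝ (fderiv ℝ u) p w v := by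
  have hcd : ContDiffAt ℝ (⊤ : ℕ∞) u p := h.smooth_u.contDiffAt (h.openU.mem_nhds hp)
  exact (hcd.isSymmSndFDerivAt (by simpa using WithTop.coe_le_coe.mpr (le_top : (2:ℕ∞) ≤ ⊤))) v w

lemma aux_pdu_fderiv (h : EikonalSetup U g φ u) (hp : p ∈ U) (α : Fin 5) (v : Pt) :
    fderiv ℝ (pd α u) p v = fderiv ℝ (fderiv ℝ u) p v (Pi.single α 1) := by
  have hdd : DifferentiableAt ℝ (fderiv ℝ u) p :=
    (((h.smooth_u.contDiffAt (h.openU.mem_nhds hp)).fderiv_right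
      (m := (⊤ : ℕ∞)) (by simp)).differentiableAt (by simp))
  have hc : HasFDerivAt (fun q' => (ContinuousLinearMap.apply ℝ ℝ (Pi.single α 1 : Pt))
        (fderiv ℝ u q'))
      ((ContinuousLinearMap.apply ℝ ℝ (Pi.single α 1 : Pt)).comp (fderiv ℝ (fderiv ℝ u) p)) p :=
    ((ContinuousLinearMap.apply ℝ ℝ (Pi.single α 1 : Pt)).hasFDerivAt).comp p hdd.hasFDerivAt
  have hc2 : HasFDerivAt (pd α u)
      ((ContinuousLinearMap.apply ℝ ℝ (Pi.single α 1 : Pt)).comp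
        (fderiv ℝ (fderiv ℝ u) p)) p := hc
  rw [hc2.fderiv]
  rfl

lemma aux_mu_diff (h : EikonalSetup U g φ u) (hp : p ∈ U) :
    DifferentiableAt ℝ (muF g φ u) p := by
  have hsd : DifferentiableAt ℝ (fun q' => ∑ α, upc g φ α 0 q' * pd α u q') p :=
    DifferentiableAt.fun_sum fun α _ => (aux_upc_diff h hp α 0).mul (aux_pdu_diff h hp α)
  exact (hsd.inv (aux_s_ne h hp)).neg

lemma aux_mu_fderiv (h : EikonalSetup U g φ u) (hp : p ∈ U) (v : Pt) :
    fderiv ℝ (muF g φ u) p v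
      = (muF g φ u p) ^ 2 *
          ∑ α, (fderiv ℝ (upc g φ α 0) p v * pd α u p
            + upc g φ α 0 p * fderiv ℝ (pd α u) p v) := by
  have hsd : DifferentiableAt ℝ (fun q' => ∑ α, upc g φ α 0 q' * pd α u q') p :=
    DifferentiableAt.fun_sum fun α _ => (aux_upc_diff h hp α 0).mul (aux_pdu_diff h hp α)
  have hsne : (∑ α, upc g φ α 0 p * pd α u p) ≠ 0 := aux_s_ne h hp
  have hinv : HasFDerivAt (fun q' => (∑ α, upc g φ α 0 q' * pd α u q')⁻¹)
      ((-((∑ α, upc g φ α 0 p * pd α u p) ^ 2)⁻¹) •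
        fderiv ℝ (fun q' => ∑ α, upc g φ α 0 q' * pd α u q') p) p :=
    (hasDerivAt_inv hsne).comp_hasFDerivAt p hsd.hasFDerivAt
  have hneg : HasFDerivAt (muF g φ u)
      (-((-((∑ α, upc g φ α 0 p * pd α u p) ^ 2)⁻¹) •
        fderiv ℝ (fun q' => ∑ α, upc g φ α 0 q' * pd α u q') p)) p := hinv.neg
  have hf := hneg.fderiv
  rw [hf]
  have hsv := aux_fderiv_sum_mul (f := fun α => upc g φ α 0) (k := fun α => pd α u)
    (fun α => aux_upc_diff h hp α 0) (fun α => aux_pdu_diff h hp α) v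
  have hμ2 : (muF g φ u p) ^ 2 = ((∑ α, upc g φ α 0 p * pd α u p) ^ 2)⁻¹ := by
    rw [aux_mu_eq, neg_sq, inv_pow]
  simp only [ContinuousLinearMap.neg_apply, ContinuousLinearMap.smul_apply, smul_eq_mul]
  rw [hsv, hμ2]
  ring

lemma aux_L_diff (h : EikonalSetup U g φ u) (hp : p ∈ U) (β : Fin 5) :
    DifferentiableAt ℝ (fun q' => Lr g φ u q' β) p := by
  show DifferentiableAt ℝ
    (fun q' => -(muF g φ u q') * ∑ α, upc g φ α β q' * pd α u q') p
  exact ((aux_mu_diff h hp).neg).mul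
    (DifferentiableAt.fun_sum fun α _ => (aux_upc_diff h hp α β).mul (aux_pdu_diff h hp α))

lemma aux_Tt_diff (h : EikonalSetup U g φ u) (hp : p ∈ U) (ν : Fin 5) :
    DifferentiableAt ℝ (fun q' => Ttil g φ u q' ν) p := by
  show DifferentiableAt ℝ (fun q' => -upc g φ ν 0 q' - Lr g φ u q' ν) p
  exact ((aux_upc_diff h hp ν 0).neg).sub (aux_L_diff h hp ν)

end Aux10d


section Aux10e

set_option maxRecDepth 40000
set_option maxHeartbeats 1600000

variable {U : Set Pt} {g : Fin 5 → Fin 5 → ℝ → Pt → ℝ} {φ u : Pt → ℝ} {p : Pt}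

lemma aux_L0 (h : EikonalSetup U g φ u) {q : Pt} (hq : q ∈ U) : Lr g φ u q 0 = 1 := by
  rw [aux_Lr_eq, aux_mu_eq]
  have := aux_s_ne (u := u) h hq
  field_simp

lemma aux_clm_apply_eq {f : Pt → ℝ} {p : Pt} (h0 : fderiv ℝ f p = 0) (v : Pt) :
    fderiv ℝ f p v = 0 := by rw [h0]; rfl

lemma aux_D1 (h : EikonalSetup U g φ u) (hp : p ∈ U) (v : Pt) :
    ∑ β, (fderiv ℝ (pd β u) p v * Lr g φ u p β
      + pd β u p * fderiv ℝ (fun x => Lr g φ u x β) p v) = 0 := by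
  have h0 : fderiv ℝ (fun x => ∑ β, pd β u x * Lr g φ u x β) p = 0 :=
    aux_fderiv_const_on h.openU hp (fun q' hq' => aux_Lu h hq')
  rw [← aux_fderiv_sum_mul (fun β => aux_pdu_diff h hp β) (fun β => aux_L_diff h hp β) v,
    aux_clm_apply_eq h0 v]

lemma aux_dE1 (h : EikonalSetup U g φ u) (hp : p ∈ U) (α : Fin 5) (v : Pt) :
    ∑ β, (fderiv ℝ (lowc g φ α β) p v * Lr g φ u p β
        + lowc g φ α β p * fderiv ℝ (fun x => Lr g φ u x β) p v)
      + (fderiv ℝ (muF g φ u) p v * pd α u p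
        + muF g φ u p * fderiv ℝ (pd α u) p v) = 0 := by
  have hd1 : DifferentiableAt ℝ (fun x => ∑ β, lowc g φ α β x * Lr g φ u x β) p :=
    DifferentiableAt.fun_sum fun β _ => (aux_lowc_diff h hp α β).mul (aux_L_diff h hp β)
  have hd2 : DifferentiableAt ℝ (fun x => muF g φ u x * pd α u x) p :=
    (aux_mu_diff h hp).mul (aux_pdu_diff h hp α)
  have h0 : fderiv ℝ (fun x => (∑ β, lowc g φ α β x * Lr g φ u x β)
      + muF g φ u x * pd α u x) p = 0 :=
    aux_fderiv_const_on (c := (0:ℝ)) h.openU hp (fun q' hq' => by rw [aux_E1 h hq']; ring)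
  have h1 : fderiv ℝ (fun x => ∑ β, lowc g φ α β x * Lr g φ u x β) p v
      + fderiv ℝ (fun x => muF g φ u x * pd α u x) p v = 0 := by
    have h2 := fderiv_fun_add hd1 hd2
    have h3 := aux_clm_apply_eq h0 v
    rw [h2] at h3
    simpa using h3
  rw [← aux_fderiv_sum_mul (fun β => aux_lowc_diff h hp α β) (fun β => aux_L_diff h hp β) v,
    ← aux_fderiv_mul_apply (aux_mu_diff h hp) (aux_pdu_diff h hp α) v]
  exact h1

lemma aux_D2 (h : EikonalSetup U g φ u) (hp : p ∈ U) (v : Pt) :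
    ∑ α, ∑ β, ((fderiv ℝ (lowc g φ α β) p v * Lr g φ u p α
        + lowc g φ α β p * fderiv ℝ (fun x => Lr g φ u x α) p v) * Lr g φ u p β
      + lowc g φ α β p * Lr g φ u p α * fderiv ℝ (fun x => Lr g φ u x β) p v) = 0 := by
  have hdin : ∀ α β, DifferentiableAt ℝ (fun x => lowc g φ α β x * Lr g φ u x α) p :=
    fun α β => (aux_lowc_diff h hp α β).mul (aux_L_diff h hp α)
  have hdF : ∀ α, DifferentiableAt ℝ (fun x => ∑ β, lowc g φ α β x * Lr g φ u x α * Lr g φ u x β) p :=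
    fun α => DifferentiableAt.fun_sum fun β _ => (hdin α β).mul (aux_L_diff h hp β)
  have h0 : fderiv ℝ (fun x => ∑ α, ∑ β, lowc g φ α β x * Lr g φ u x α * Lr g φ u x β) p = 0 :=
    aux_fderiv_const_on h.openU hp (fun q' hq' => aux_gLL h hq')
  have h1 : ∑ α, fderiv ℝ (fun x => ∑ β, lowc g φ α β x * Lr g φ u x α * Lr g φ u x β) p v = 0 := by
    have h2 := fderiv_fun_sum (u := Finset.univ)
      (A := fun α x => ∑ β, lowc g φ α β x * Lr g φ u x α * Lr g φ u x β)
      (fun α _ => hdF α)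
    have h3 := aux_clm_apply_eq h0 v
    rw [h2] at h3
    rw [← h3, ContinuousLinearMap.sum_apply]
  rw [← h1]
  refine Finset.sum_congr rfl fun α _ => ?_
  have h4 := aux_fderiv_sum_mul (f := fun β x => lowc g φ α β x * Lr g φ u x α)
    (k := fun β x => Lr g φ u x β) (fun β => hdin α β) (fun β => aux_L_diff h hp β) v
  rw [h4]
  refine Finset.sum_congr rfl fun β _ => ?_
  rw [aux_fderiv_mul_apply (aux_lowc_diff h hp α β) (aux_L_diff h hp α) v]

end Aux10e


set_option maxRecDepth 40000 in
set_option maxHeartbeats 3200000 in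
/-- the transport equation for the inverse foliation density `μ`:
`L̊μ = −(1/2)μ[(FG)_{L̊L̊}(L̊) + 2(FG)_{T̃L̊}(L̊)] + (1/2)F_{L̊L̊}·Tφ
  + (1/2)Σ_γ G^γ_{L̊L̊}·T(∂_γφ)` on `U`. -/
theorem statement10
    (U : Set Pt) (g : Fin 5 → Fin 5 → ℝ → Pt → ℝ) (φ u : Pt → ℝ)
    (h : EikonalSetup U g φ u) :
    ∀ p ∈ U,
      vfD (Lr g φ u) (muF g φ u) p
        = -(1 / 2) * muF g φ u p *
            (FGc g φ p (Lr g φ u p) (Lr g φ u p) (Lr g φ u)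
              + 2 * FGc g φ p (Ttil g φ u p) (Lr g φ u p) (Lr g φ u))
          + (1 / 2) * Fc g φ p (Lr g φ u p) (Lr g φ u p) * vfD (Tvf g φ u) φ p
          + (1 / 2) * ∑ γ, Gc g φ γ p (Lr g φ u p) (Lr g φ u p) *
              vfD (Tvf g φ u) (pd γ φ) p := by
  intro p hp
  have hμ : muF g φ u p ≠ 0 := aux_mu_ne h hp
  -- abbreviations
  set μp := muF g φ u p with hμp
  set Lv := Lr g φ u p with hLv
  set Tv := Ttil g φ u p with hTv
  set zv : Pt := Lv + Tv with hzv
  -- the three basic double sums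
  set S1 := ∑ α, ∑ β, fderiv ℝ (lowc g φ α β) p Lv * Lv α * Lv β with hS1
  set S2 := ∑ α, ∑ β, fderiv ℝ (lowc g φ α β) p Lv * Tv α * Lv β with hS2
  set S3 := ∑ α, ∑ β, fderiv ℝ (lowc g φ α β) p Tv * Lv α * Lv β with hS3
  -- generic conversion of `FGc` into a double sum of directional derivatives of `lowc`
  have hFG : ∀ (V W : Pt) (v : Pt),
      Fc g φ p V W * fderiv ℝ φ p v
        + ∑ γ, Gc g φ γ p V W * fderiv ℝ (pd γ φ) p v
      = ∑ α, ∑ β, fderiv ℝ (lowc g φ α β) p v * V α * W β := by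
    intro V W v
    have hchain : ∀ α β, fderiv ℝ (lowc g φ α β) p v
        = lowF g φ α β p * fderiv ℝ φ p v
          + ∑ γ, lowG g φ γ α β p * fderiv ℝ (pd γ φ) p v :=
      fun α β => aux_lowc_fderiv h hp α β v
    have hsw : ∑ γ, ∑ α, ∑ β,
          lowG g φ γ α β p * V α * W β * fderiv ℝ (pd γ φ) p v
        = ∑ α, ∑ β, ∑ γ, lowG g φ γ α β p * V α * W β * fderiv ℝ (pd γ φ) p v := by
      rw [Finset.sum_comm]
      exact Finset.sum_congr rfl fun α _ => Finset.sum_comm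
    have hFc : Fc g φ p V W = ∑ α, ∑ β, lowF g φ α β p * V α * W β := rfl
    have hGc : ∀ γ, Gc g φ γ p V W = ∑ α, ∑ β, lowG g φ γ α β p * V α * W β :=
      fun γ => rfl
    calc Fc g φ p V W * fderiv ℝ φ p v
          + ∑ γ, Gc g φ γ p V W * fderiv ℝ (pd γ φ) p v
        = (∑ α, ∑ β, lowF g φ α β p * V α * W β * fderiv ℝ φ p v)
          + ∑ γ, ∑ α, ∑ β, lowG g φ γ α β p * V α * W β * fderiv ℝ (pd γ φ) p v := by
          congr 1
          · rw [hFc, Finset.sum_mul]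
            exact Finset.sum_congr rfl fun α _ => by rw [Finset.sum_mul]
          · refine Finset.sum_congr rfl fun γ _ => ?_
            rw [hGc γ, Finset.sum_mul]
            exact Finset.sum_congr rfl fun α _ => by rw [Finset.sum_mul]
      _ = (∑ α, ∑ β, lowF g φ α β p * V α * W β * fderiv ℝ φ p v)
          + ∑ α, ∑ β, ∑ γ, lowG g φ γ α β p * V α * W β * fderiv ℝ (pd γ φ) p v := by
          rw [hsw]
      _ = ∑ α, ∑ β, (lowF g φ α β p * fderiv ℝ φ p v
            + ∑ γ, lowG g φ γ α β p * fderiv ℝ (pd γ φ) p v) * V α * W β := by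
          rw [← Finset.sum_add_distrib]
          refine Finset.sum_congr rfl fun α _ => ?_
          rw [← Finset.sum_add_distrib]
          refine Finset.sum_congr rfl fun β _ => ?_
          rw [add_mul, add_mul, Finset.sum_mul, Finset.sum_mul]
          congr 1
          · ring
          · exact Finset.sum_congr rfl fun γ _ => by ring
      _ = ∑ α, ∑ β, fderiv ℝ (lowc g φ α β) p v * V α * W β := by
          refine Finset.sum_congr rfl fun α _ => Finset.sum_congr rfl fun β _ => ?_
          rw [← hchain α β]
  -- RHS pieces
  have hR1 : FGc g φ p Lv Lv (Lr g φ u) = S1 := hFG Lv Lv Lv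
  have hR2 : FGc g φ p Tv Lv (Lr g φ u) = S2 := hFG Tv Lv Lv
  have hR3 : Fc g φ p Lv Lv * vfD (Tvf g φ u) φ p
      + ∑ γ, Gc g φ γ p Lv Lv * vfD (Tvf g φ u) (pd γ φ) p = μp * S3 := by
    have hTp : Tvf g φ u p = μp • Tv := by
      funext ν
      rfl
    have h1 : ∀ f : Pt → ℝ, vfD (Tvf g φ u) f p = μp * fderiv ℝ f p Tv := by
      intro f
      show fderiv ℝ f p (Tvf g φ u p) = μp * fderiv ℝ f p Tv
      rw [hTp, (fderiv ℝ f p).map_smul, smul_eq_mul]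
    rw [h1 φ]
    have h2 : ∑ γ, Gc g φ γ p Lv Lv * vfD (Tvf g φ u) (pd γ φ) p
        = μp * ∑ γ, Gc g φ γ p Lv Lv * fderiv ℝ (pd γ φ) p Tv := by
      rw [Finset.mul_sum]
      refine Finset.sum_congr rfl fun γ _ => ?_
      rw [h1 (pd γ φ)]
      ring
    rw [h2]
    have h3 := hFG Lv Lv Tv
    calc Fc g φ p Lv Lv * (μp * fderiv ℝ φ p Tv)
          + μp * ∑ γ, Gc g φ γ p Lv Lv * fderiv ℝ (pd γ φ) p Tv
        = μp * (Fc g φ p Lv Lv * fderiv ℝ φ p Tv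
            + ∑ γ, Gc g φ γ p Lv Lv * fderiv ℝ (pd γ φ) p Tv) := by ring
      _ = μp * S3 := by rw [h3]
  -- now the computation of the left-hand side
  -- (f1)
  have hf1 : ∑ α, (Lv α + Tv α) * pd α u p = μp⁻¹ := by
    have h1 : ∀ α, Lv α + Tv α = -upc g φ α 0 p := by
      intro α
      have := aux_up0 (g := g) (φ := φ) (u := u) α p
      rw [← hLv, ← hTv] at this
      linarith
    have h2 : μp⁻¹ = -(∑ α, upc g φ α 0 p * pd α u p) := by
      rw [hμp, aux_mu_eq, inv_neg, inv_inv]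
    rw [h2, ← Finset.sum_neg_distrib]
    refine Finset.sum_congr rfl fun α _ => ?_
    rw [h1 α]
    ring
  -- (f2): the `Q`-term vanishes
  have hL0d : fderiv ℝ (fun x => Lr g φ u x 0) p = 0 :=
    aux_fderiv_const_on (c := (1:ℝ)) h.openU hp (fun q' hq' => aux_L0 h hq')
  have hE4p : ∀ β, ∑ α, lowc g φ β α p * (Lv α + Tv α) = -(if β = 0 then 1 else 0) := by
    intro β
    have h1 : ∀ α, Lv α + Tv α = -upc g φ α 0 p := by
      intro α
      have := aux_up0 (g := g) (φ := φ) (u := u) α p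
      rw [← hLv, ← hTv] at this
      linarith
    calc ∑ α, lowc g φ β α p * (Lv α + Tv α)
        = ∑ α, -(lowc g φ β α p * upc g φ α 0 p) := by
          refine Finset.sum_congr rfl fun α _ => ?_
          rw [h1 α]; ring
      _ = -∑ α, lowc g φ β α p * upc g φ α 0 p := by rw [Finset.sum_neg_distrib]
      _ = -(if β = 0 then 1 else 0) := by rw [aux_inv_mul h hp β 0]
  have hT2 : ∑ α, (Lv α + Tv α) *
      (∑ β, lowc g φ α β p * fderiv ℝ (fun x => Lr g φ u x β) p Lv) = 0 := by
    calc ∑ α, (Lv α + Tv α) *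
          (∑ β, lowc g φ α β p * fderiv ℝ (fun x => Lr g φ u x β) p Lv)
        = ∑ α, ∑ β, (Lv α + Tv α) *
            (lowc g φ α β p * fderiv ℝ (fun x => Lr g φ u x β) p Lv) := by
          exact Finset.sum_congr rfl fun α _ => Finset.mul_sum _ _ _
      _ = ∑ β, ∑ α, (Lv α + Tv α) *
            (lowc g φ α β p * fderiv ℝ (fun x => Lr g φ u x β) p Lv) := Finset.sum_comm
      _ = ∑ β, (∑ α, lowc g φ β α p * (Lv α + Tv α)) *
            fderiv ℝ (fun x => Lr g φ u x β) p Lv := by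
          refine Finset.sum_congr rfl fun β _ => ?_
          rw [Finset.sum_mul]
          refine Finset.sum_congr rfl fun α _ => ?_
          rw [aux_lowc_symm h β α p]
          ring
      _ = ∑ β, -(if β = 0 then 1 else 0) *
            fderiv ℝ (fun x => Lr g φ u x β) p Lv := by
          refine Finset.sum_congr rfl fun β _ => ?_
          rw [hE4p β]
      _ = 0 := by
          have hper : ∀ β : Fin 5, -(if β = 0 then (1:ℝ) else 0) *
                fderiv ℝ (fun x => Lr g φ u x β) p Lv
              = if β = 0 then -fderiv ℝ (fun x => Lr g φ u x β) p Lv else 0 := by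
            intro β
            by_cases h0 : β = 0 <;> simp [h0]
          rw [Finset.sum_congr rfl fun β _ => hper β,
            Finset.sum_ite_eq' Finset.univ (0 : Fin 5)
              (fun β => -fderiv ℝ (fun x => Lr g φ u x β) p Lv)]
          simp [aux_clm_apply_eq hL0d Lv]
  -- the second-derivative (`B`) term
  have hzva : ∀ ν, zv ν = Lv ν + Tv ν := fun ν => rfl
  have hb1 : ∑ α, upc g φ α 0 p * fderiv ℝ (pd α u) p Lv
      = -∑ β, Lv β * fderiv ℝ (pd β u) p zv := by
    have e3 : (fun α => upc g φ α 0 p) = -zv := by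
      funext ν
      have := aux_up0 (g := g) (φ := φ) (u := u) ν p
      rw [← hLv, ← hTv] at this
      rw [this]
      show -(Lv ν + Tv ν) = (-zv) ν
      rw [Pi.neg_apply, hzva ν]
    calc ∑ α, upc g φ α 0 p * fderiv ℝ (pd α u) p Lv
        = ∑ α, upc g φ α 0 p * fderiv ℝ (fderiv ℝ u) p Lv (Pi.single α 1) := by
          exact Finset.sum_congr rfl fun α _ => by rw [aux_pdu_fderiv h hp α Lv]
      _ = fderiv ℝ (fderiv ℝ u) p Lv (fun α => upc g φ α 0 p) :=
          (aux_clm_expand (fderiv ℝ (fderiv ℝ u) p Lv) _).symm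
      _ = -fderiv ℝ (fderiv ℝ u) p Lv zv := by rw [e3, map_neg]
      _ = -fderiv ℝ (fderiv ℝ u) p zv Lv := by rw [aux_snd_symm h hp Lv zv]
      _ = -∑ β, Lv β * fderiv ℝ (fderiv ℝ u) p zv (Pi.single β 1) := by
          rw [aux_clm_expand (fderiv ℝ (fderiv ℝ u) p zv) Lv]
      _ = -∑ β, Lv β * fderiv ℝ (pd β u) p zv := by
          congr 1
          exact Finset.sum_congr rfl fun β _ => by rw [aux_pdu_fderiv h hp β zv]
  have hb2 : ∑ β, Lv β * fderiv ℝ (pd β u) p zv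
      = -∑ β, pd β u p * fderiv ℝ (fun x => Lr g φ u x β) p zv := by
    have hD1 := aux_D1 h hp zv
    rw [Finset.sum_add_distrib] at hD1
    have h1 : ∑ β, Lv β * fderiv ℝ (pd β u) p zv
        = ∑ β, fderiv ℝ (pd β u) p zv * Lr g φ u p β := by
      exact Finset.sum_congr rfl fun β _ => by rw [← hLv]; ring
    rw [h1]
    linarith
  have hb4 : ∑ β, pd β u p * fderiv ℝ (fun x => Lr g φ u x β) p zv
      = -μp⁻¹ * ∑ β, ∑ γ, lowc g φ β γ p * Lv γ *
          fderiv ℝ (fun x => Lr g φ u x β) p zv := by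
    calc ∑ β, pd β u p * fderiv ℝ (fun x => Lr g φ u x β) p zv
        = ∑ β, (-μp⁻¹ * ∑ γ, lowc g φ β γ p * Lr g φ u p γ) *
            fderiv ℝ (fun x => Lr g φ u x β) p zv := by
          refine Finset.sum_congr rfl fun β _ => ?_
          rw [aux_psi_eq h hp β, ← hμp]
      _ = -μp⁻¹ * ∑ β, ∑ γ, lowc g φ β γ p * Lv γ *
            fderiv ℝ (fun x => Lr g φ u x β) p zv := by
          rw [Finset.mul_sum]
          refine Finset.sum_congr rfl fun β _ => ?_
          rw [← hLv, mul_assoc, Finset.sum_mul]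
  have hb5 : ∑ β, ∑ γ, lowc g φ β γ p * Lv γ *
        fderiv ℝ (fun x => Lr g φ u x β) p zv
      = -(1/2) * ∑ α, ∑ β, fderiv ℝ (lowc g φ α β) p zv * Lv α * Lv β := by
    have hD2 := aux_D2 h hp zv
    have hX : ∑ α, ∑ β, ((fderiv ℝ (lowc g φ α β) p zv * Lr g φ u p α
          + lowc g φ α β p * fderiv ℝ (fun x => Lr g φ u x α) p zv) * Lr g φ u p β
        + lowc g φ α β p * Lr g φ u p α * fderiv ℝ (fun x => Lr g φ u x β) p zv)
        = (∑ α, ∑ β, fderiv ℝ (lowc g φ α β) p zv * Lv α * Lv β)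
          + ((∑ α, ∑ β, lowc g φ α β p * fderiv ℝ (fun x => Lr g φ u x α) p zv * Lv β)
          + (∑ α, ∑ β, lowc g φ α β p * Lv α * fderiv ℝ (fun x => Lr g φ u x β) p zv)) := by
      rw [← Finset.sum_add_distrib, ← Finset.sum_add_distrib]
      refine Finset.sum_congr rfl fun α _ => ?_
      rw [← Finset.sum_add_distrib, ← Finset.sum_add_distrib]
      refine Finset.sum_congr rfl fun β _ => ?_
      rw [← hLv]
      ring
    rw [hX] at hD2
    have hYZ : ∑ α, ∑ β, lowc g φ α β p * fderiv ℝ (fun x => Lr g φ u x α) p zv * Lv β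
        = ∑ α, ∑ β, lowc g φ α β p * Lv α * fderiv ℝ (fun x => Lr g φ u x β) p zv := by
      rw [Finset.sum_comm]
      refine Finset.sum_congr rfl fun α _ => Finset.sum_congr rfl fun β _ => ?_
      rw [aux_lowc_symm h β α p]
      ring
    have hZT : ∑ β, ∑ γ, lowc g φ β γ p * Lv γ *
          fderiv ℝ (fun x => Lr g φ u x β) p zv
        = ∑ α, ∑ β, lowc g φ α β p * Lv α * fderiv ℝ (fun x => Lr g φ u x β) p zv := by
      rw [Finset.sum_comm]
      refine Finset.sum_congr rfl fun α _ => Finset.sum_congr rfl fun β _ => ?_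
      rw [aux_lowc_symm h β α p]
    rw [hZT]
    rw [hYZ] at hD2
    linarith
  -- split of the direction `zv` into `Lv + Tv`
  have hsplit : ∀ α β : Fin 5, fderiv ℝ (lowc g φ α β) p zv
      = fderiv ℝ (lowc g φ α β) p Lv + fderiv ℝ (lowc g φ α β) p Tv := by
    intro α β
    rw [hzv, map_add]
  have hzS : ∑ α, ∑ β, fderiv ℝ (lowc g φ α β) p zv * Lv α * Lv β = S1 + S3 := by
    rw [hS1, hS3, ← Finset.sum_add_distrib]
    refine Finset.sum_congr rfl fun α _ => ?_
    rw [← Finset.sum_add_distrib]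
    refine Finset.sum_congr rfl fun β _ => ?_
    rw [hsplit α β]
    ring
  -- the `B`-term identity
  have hB : ∑ α, (Lv α + Tv α) * fderiv ℝ (pd α u) p Lv
      = -(1/2) * μp⁻¹ * (S1 + S3) := by
    have h1 : ∑ α, (Lv α + Tv α) * fderiv ℝ (pd α u) p Lv
        = -∑ α, upc g φ α 0 p * fderiv ℝ (pd α u) p Lv := by
      rw [← Finset.sum_neg_distrib]
      refine Finset.sum_congr rfl fun α _ => ?_
      have := aux_up0 (g := g) (φ := φ) (u := u) α p
      rw [← hLv, ← hTv] at this
      rw [this]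
      ring
    rw [h1, hb1, hb2, hb4, hb5, hzS]
    ring
  -- sum the differentiated `E1` identity against `Lv + Tv`
  have hkey : ∑ α, (Lv α + Tv α) *
      ((∑ β, (fderiv ℝ (lowc g φ α β) p Lv * Lr g φ u p β
        + lowc g φ α β p * fderiv ℝ (fun x => Lr g φ u x β) p Lv))
      + (fderiv ℝ (muF g φ u) p Lv * pd α u p
        + muF g φ u p * fderiv ℝ (pd α u) p Lv)) = 0 := by
    refine Finset.sum_eq_zero fun α _ => ?_
    rw [aux_dE1 h hp α Lv, mul_zero]
  -- expand `hkey` into the four pieces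
  have hexp : (∑ α, (Lv α + Tv α) * ∑ β, fderiv ℝ (lowc g φ α β) p Lv * Lv β)
      + (∑ α, (Lv α + Tv α) *
          ∑ β, lowc g φ α β p * fderiv ℝ (fun x => Lr g φ u x β) p Lv)
      + fderiv ℝ (muF g φ u) p Lv * (∑ α, (Lv α + Tv α) * pd α u p)
      + μp * (∑ α, (Lv α + Tv α) * fderiv ℝ (pd α u) p Lv) = 0 := by
    rw [← hkey]
    rw [Finset.mul_sum, Finset.mul_sum]
    rw [← Finset.sum_add_distrib, ← Finset.sum_add_distrib, ← Finset.sum_add_distrib]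
    refine Finset.sum_congr rfl fun α _ => ?_
    rw [Finset.sum_add_distrib, mul_add, mul_add, mul_add]
    rw [← hμp, ← hLv]
    have hsg : ∑ β, fderiv ℝ (lowc g φ α β) p Lv * Lr g φ u p β
        = ∑ β, fderiv ℝ (lowc g φ α β) p Lv * Lv β := by rw [← hLv]
    rw [hsg]
    ring
  -- identify the first piece with `S1 + S2`
  have hT1 : ∑ α, (Lv α + Tv α) * ∑ β, fderiv ℝ (lowc g φ α β) p Lv * Lv β
      = S1 + S2 := by
    rw [hS1, hS2, ← Finset.sum_add_distrib]
    refine Finset.sum_congr rfl fun α _ => ?_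
    rw [Finset.mul_sum, ← Finset.sum_add_distrib]
    refine Finset.sum_congr rfl fun β _ => ?_
    ring
  -- solve for the derivative of `μ`
  have hLHS : fderiv ℝ (muF g φ u) p Lv
      = -(1/2) * μp * S1 - μp * S2 + (1/2) * μp * S3 := by
    rw [hT1, hT2, hf1, hB] at hexp
    have h2 : fderiv ℝ (muF g φ u) p Lv * μp⁻¹
        = -(S1 + S2) + (1/2) * (S1 + S3) := by
      have : μp * (-(1/2) * μp⁻¹ * (S1 + S3)) = -(1/2) * (S1 + S3) := by
        field_simp
      rw [this] at hexp
      linarith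
    have h3 := congrArg (fun x => x * μp) h2
    rw [mul_assoc, inv_mul_cancel₀ hμ, mul_one] at h3
    rw [h3]
    ring
  -- final assembly
  show fderiv ℝ (muF g φ u) p Lv = _
  rw [hLHS, hR1, hR2]
  have hgoal3 : (1:ℝ) / 2 * Fc g φ p Lv Lv * vfD (Tvf g φ u) φ p
      + (1:ℝ) / 2 * ∑ γ, Gc g φ γ p Lv Lv * vfD (Tvf g φ u) (pd γ φ) p
      = (1:ℝ)/2 * (μp * S3) := by
    rw [← hR3]
    ring
  rw [add_assoc, hgoal3]
  ring


end PaperSP4D
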